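/- Let X be a finite set of nonempty words over Σ and let alp(X) be the set of letters of Σ occurring in the words of X. If |X| = |alp(X)| = k, then X* is a k-maximal submonoid of Σ* if and only if X* = alp(X)*, i.e., X* is the set of all words whose letters all lie in alp(X). -/

import Mathlib

/-- The basis of a submonoid `M` of the free monoid `Σ*`: `(M \ {ε}) \ (M \ {ε})²`. -/
def basisOf {α : Type*} (M : Submonoid (FreeMonoid α)) : Set (FreeMonoid α) :=
  ((M : Set (FreeMonoid α)) \ {1}) \
    {w | ∃ u ∈ (M : Set (FreeMonoid α)) \ {1}, ∃ v ∈ (M : Set (FreeMonoid α)) \ {1}, w = u * v}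

/-- A submonoid of `Σ*` is `k`-maximal if its rank (cardinality of its basis) is at most `k`
and it is maximal (w.r.t. inclusion) among submonoids of rank at most `k`. -/
def IsKMaximal {α : Type*} (k : ℕ) (M : Submonoid (FreeMonoid α)) : Prop :=
  (basisOf M).Finite ∧ (basisOf M).ncard ≤ k ∧
    ∀ M' : Submonoid (FreeMonoid α),
      (basisOf M').Finite → (basisOf M').ncard ≤ k → M ≤ M' → M = M'

/-- `alp X`: the set of letters occurring in the words of `X`. -/
def alp {α : Type*} (X : Set (FreeMonoid α)) : Set α :=
  {a | ∃ w ∈ X, a ∈ FreeMonoid.toList w}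

section Aux

variable {α : Type*}

open FreeMonoid

lemma toList_ne_nil_of_ne_one {w : FreeMonoid α} (h : w ≠ 1) : w.toList ≠ [] := by
  intro hc
  apply h
  have := congrArg FreeMonoid.ofList hc
  simpa using this

lemma length_pos_of_ne_one {w : FreeMonoid α} (h : w ≠ 1) : 0 < w.toList.length :=
  List.length_pos_iff.mpr (toList_ne_nil_of_ne_one h)

lemma of_mem_basisOf {M : Submonoid (FreeMonoid α)} {a : α} (h : FreeMonoid.of a ∈ M) :
    FreeMonoid.of a ∈ basisOf M := by
  constructor
  · exact ⟨h, by
      simp only [Set.mem_singleton_iff]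
      intro hc
      have := congrArg FreeMonoid.toList hc
      simp [FreeMonoid.toList_of, FreeMonoid.toList_one] at this⟩
  · rintro ⟨u, ⟨hu, hu1⟩, v, ⟨hv, hv1⟩, heq⟩
    have := congrArg (fun w => w.toList.length) heq
    simp only [FreeMonoid.toList_of, FreeMonoid.toList_mul, List.length_append,
      List.length_singleton] at this
    have h1 := length_pos_of_ne_one (w := u) hu1
    have h2 := length_pos_of_ne_one (w := v) hv1
    omega

lemma mem_closure_basisOf (M : Submonoid (FreeMonoid α)) :
    ∀ w ∈ M, w ∈ Submonoid.closure (basisOf M) := by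
  intro w hw
  generalize hn : w.toList.length = n
  induction n using Nat.strong_induction_on generalizing w with
  | _ n ih =>
    by_cases h1 : w = 1
    · exact h1 ▸ one_mem _
    by_cases hb : w ∈ basisOf M
    · exact Submonoid.subset_closure hb
    · have hdec : ∃ u ∈ (M : Set (FreeMonoid α)) \ {1},
          ∃ v ∈ (M : Set (FreeMonoid α)) \ {1}, w = u * v := by
        by_contra hc
        exact hb ⟨⟨hw, h1⟩, hc⟩
      obtain ⟨u, ⟨hu, hu1⟩, v, ⟨hv, hv1⟩, rfl⟩ := hdec
      have hu1' : u ≠ 1 := hu1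
      have hv1' : v ≠ 1 := hv1
      have hlen : (u * v).toList.length = u.toList.length + v.toList.length := by
        simp [FreeMonoid.toList_mul]
      have h1p := length_pos_of_ne_one hu1'
      have h2p := length_pos_of_ne_one hv1'
      exact mul_mem (ih u.toList.length (by omega) u hu rfl)
        (ih v.toList.length (by omega) v hv rfl)

lemma mem_closure_image_of {S : Set α} {w : FreeMonoid α} :
    w ∈ Submonoid.closure (FreeMonoid.of '' S) ↔ ∀ a ∈ w.toList, a ∈ S := by
  constructor
  · intro hw
    induction hw using Submonoid.closure_induction with
    | mem x hx =>
      obtain ⟨a, ha, rfl⟩ := hx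
      intro b hb
      simp only [FreeMonoid.toList_of, List.mem_singleton] at hb
      exact hb ▸ ha
    | one => simp [FreeMonoid.toList_one]
    | mul x y _ _ hx hy =>
      intro a ha
      rw [FreeMonoid.toList_mul, List.mem_append] at ha
      exact ha.elim (hx a) (hy a)
  · intro h
    induction w using FreeMonoid.recOn with
    | one => exact one_mem _
    | of_mul a xs ihx =>
      refine mul_mem (Submonoid.subset_closure ⟨a, h a ?_, rfl⟩) (ihx fun b hb => h b ?_)
      · simp [FreeMonoid.toList_mul, FreeMonoid.toList_of]
      · simp only [FreeMonoid.toList_mul, FreeMonoid.toList_of, List.mem_append]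
        exact Or.inr hb

lemma basisOf_closure_image_of (S : Set α) :
    basisOf (Submonoid.closure (FreeMonoid.of '' S)) = FreeMonoid.of '' S := by
  ext w
  constructor
  · rintro ⟨⟨hw, hw1⟩, hnd⟩
    have hw1' : w ≠ 1 := hw1
    have hlet : ∀ a ∈ w.toList, a ∈ S := mem_closure_image_of.mp hw
    -- w has length exactly 1
    rcases hl : w.toList with _ | ⟨a, rest⟩
    · exact absurd hl (toList_ne_nil_of_ne_one hw1')
    rcases hrest : rest with _ | ⟨b, rest'⟩
    · -- length 1
      refine ⟨a, hlet a (by simp [hl]), ?_⟩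
      apply FreeMonoid.toList.injective
      simp [FreeMonoid.toList_of, hl, hrest]
    · -- length ≥ 2: decomposable, contradiction
      exfalso
      apply hnd
      refine ⟨FreeMonoid.of a, ⟨?_, ?_⟩, FreeMonoid.ofList rest, ⟨?_, ?_⟩, ?_⟩
      · exact Submonoid.subset_closure ⟨a, hlet a (by simp [hl]), rfl⟩
      · simp only [Set.mem_singleton_iff]
        intro hc
        have := congrArg FreeMonoid.toList hc
        simp [FreeMonoid.toList_of, FreeMonoid.toList_one] at this
      · refine mem_closure_image_of.mpr fun b hb => hlet b ?_
        simp only [FreeMonoid.toList_ofList] at hb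
        simp [hl, hb]
      · simp only [Set.mem_singleton_iff]
        intro hc
        have := congrArg FreeMonoid.toList hc
        simp [FreeMonoid.toList_one, hrest] at this
      · apply FreeMonoid.toList.injective
        simp [hl, FreeMonoid.toList_mul, FreeMonoid.toList_of]
  · rintro ⟨a, ha, rfl⟩
    exact of_mem_basisOf (Submonoid.subset_closure ⟨a, ha, rfl⟩)

lemma alp_finite {X : Set (FreeMonoid α)} (hfin : X.Finite) : (alp X).Finite := by
  have : alp X = ⋃ w ∈ X, {a | a ∈ FreeMonoid.toList w} := by
    ext a; simp [alp]
  rw [this]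
  exact hfin.biUnion fun w _ => List.finite_toSet _

end Aux

/-- If `X` is a finite set of `k` nonempty words using exactly `k` letters, then `X*` is
`k`-maximal iff `X* = alp(X)*`. -/
theorem kMaximal_iff_closure_alp {α : Type*} (k : ℕ) (X : Set (FreeMonoid α))
    (hfin : X.Finite) (hne : ∀ w ∈ X, w ≠ 1)
    (hcard : X.ncard = k) (halp : (alp X).ncard = k) :
    IsKMaximal k (Submonoid.closure X) ↔
      Submonoid.closure X = Submonoid.closure (FreeMonoid.of '' alp X) := by
  have halpfin : (alp X).Finite := alp_finite hfin
  have himgfin : (FreeMonoid.of '' alp X).Finite := halpfin.image _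
  have himgcard : (FreeMonoid.of '' alp X).ncard = k := by
    rw [Set.ncard_image_of_injective _ FreeMonoid.of_injective, halp]
  have hbasis := basisOf_closure_image_of (alp X)
  have hXle : Submonoid.closure X ≤ Submonoid.closure (FreeMonoid.of '' alp X) := by
    rw [Submonoid.closure_le]
    intro w hw
    exact mem_closure_image_of.mpr fun a ha => ⟨w, hw, ha⟩
  constructor
  · intro h
    refine h.2.2 _ ?_ ?_ hXle
    · rw [hbasis]; exact himgfin
    · rw [hbasis]; exact himgcard.le
  · intro h
    rw [h]
    refine ⟨by rw [hbasis]; exact himgfin, by rw [hbasis]; exact himgcard.le, ?_⟩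
    intro M' hfin' hcard' hle
    have hsub : FreeMonoid.of '' alp X ⊆ basisOf M' := by
      rintro w ⟨a, ha, rfl⟩
      exact of_mem_basisOf (hle (Submonoid.subset_closure ⟨a, ha, rfl⟩))
    have heq : FreeMonoid.of '' alp X = basisOf M' := by
      apply Set.eq_of_subset_of_ncard_le hsub _ hfin'
      rw [himgcard]
      exact hcard'
    have hM' : M' = Submonoid.closure (basisOf M') := by
      apply le_antisymm
      · intro w hw
        exact mem_closure_basisOf M' w hw
      · rw [Submonoid.closure_le]
        exact fun w hw => hw.1.1
    rw [hM', ← heq]
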